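/- The probability that a uniformly random pair (f, g) of linear maps f : F_q^m → F_q^n, g : F_q^n → F_q^m satisfies that g∘f is nilpotent equals q^{−m} + q^{−n} − q^{−m−n}; equivalently, the number of nilpotent pairs divided by q^{2mn} equals (q^m + q^n − 1)/q^{m+n}. -/

import Mathlib

open Function LinearMap Module Submodule

section Generic

variable {F : Type*} [Field F] [Fintype F]

local notation "q" => Fintype.card F

variable {V W U : Type*} [AddCommGroup V] [Module F V] [AddCommGroup W] [Module F W]
  [AddCommGroup U] [Module F U]

lemma myFinite (hV : FiniteDimensional F V) : Finite V := by
  have e := (Module.finBasis F V).equivFun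
  exact Finite.of_equiv _ e.toEquiv.symm

lemma card_vs [FiniteDimensional F V] : Nat.card V = q ^ (finrank F V) := by
  have : Finite V := myFinite ‹_›
  have : Fintype V := Fintype.ofFinite V
  rw [Nat.card_eq_fintype_card, card_eq_pow_finrank (K := F)]

lemma card_lm [FiniteDimensional F V] [FiniteDimensional F W] :
    Nat.card (V →ₗ[F] W) = q ^ (finrank F V * finrank F W) := by
  have e := LinearMap.toMatrix (Module.finBasis F V) (Module.finBasis F W)
  rw [Nat.card_congr e.toEquiv]
  have : Nat.card (Matrix (Fin (finrank F W)) (Fin (finrank F V)) F) =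
      q ^ (finrank F W * (finrank F V * 1)) := by
    simp [Matrix, Nat.card_fun, Nat.card_eq_fintype_card]
    ring
  rw [this]; ring_nf

instance lmFinite [FiniteDimensional F V] [FiniteDimensional F W] : Finite (V →ₗ[F] W) := by
  have : Finite V := myFinite ‹_›
  have : Finite W := myFinite ‹_›
  exact DFunLike.finite _

instance leqFinite [FiniteDimensional F V] [FiniteDimensional F W] : Finite (V ≃ₗ[F] W) :=
  Finite.of_injective (fun e => (e : V →ₗ[F] W)) (fun e1 e2 h => by
    apply LinearEquiv.toLinearMap_injective h)

/-- fiber counting along a surjective linear map -/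
lemma card_fiber [FiniteDimensional F V] [FiniteDimensional F W]
    (f : V →ₗ[F] W) (hf : Surjective f) (P : W → Prop) :
    Nat.card {a : V // P (f a)} = Nat.card {b : W // P b} * Nat.card (ker f) := by
  have : Finite V := myFinite ‹_›
  have : Finite W := myFinite ‹_›
  have e : {a : V // P (f a)} ≃ {b : W // P b} × (ker f) := by
    refine ⟨fun a => ⟨⟨f a.1, a.2⟩, ⟨a.1 - (hf (f a.1)).choose, ?_⟩⟩,
      fun bk => ⟨(hf bk.1.1).choose + bk.2.1, ?_⟩, fun a => ?_, fun bk => ?_⟩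
    · simp [LinearMap.mem_ker, map_sub, (hf (f a.1)).choose_spec]
    · have h1 := (hf bk.1.1).choose_spec
      have h2 := bk.2.2
      rw [LinearMap.mem_ker] at h2
      simp [map_add, h1, h2, bk.1.2]
    · simp
    · have h1 := (hf bk.1.1).choose_spec
      have h2 := bk.2.2
      rw [LinearMap.mem_ker] at h2
      ext
      · simp [map_add, h1, h2]
      · simp [map_add, h1, h2]
  rw [Nat.card_congr e, Nat.card_prod]

/-- lifting linear maps along a quotient -/
noncomputable def equivLift (K : Submodule F V) :
    ((V ⧸ K) →ₗ[F] W) ≃ {f : V →ₗ[F] W // K ≤ ker f} where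
  toFun g := ⟨g ∘ₗ K.mkQ, fun x hx => by simp [LinearMap.mem_ker, (Submodule.Quotient.mk_eq_zero K).2 hx]⟩
  invFun f := K.liftQ f.1 f.2
  left_inv g := by
    refine Submodule.linearMap_qext _ ?_
    ext x; simp
  right_inv f := by ext x; simp

lemma card_vanish [FiniteDimensional F V] [FiniteDimensional F W] (K : Submodule F V) :
    Nat.card {f : V →ₗ[F] W // K ≤ ker f} = q ^ ((finrank F V - finrank F K) * finrank F W) := by
  rw [← Nat.card_congr (equivLift K), card_lm]
  have h : finrank F (V ⧸ K) = finrank F V - finrank F K := by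
    have := Submodule.finrank_quotient_add_finrank K
    omega
  rw [h]

/-- counting via postcomposition with a surjection -/
lemma card_postcomp [FiniteDimensional F V] [FiniteDimensional F W] [FiniteDimensional F U]
    (π : V →ₗ[F] W) (hπ : Surjective π) (P : (U →ₗ[F] W) → Prop) :
    Nat.card {ψ : U →ₗ[F] V // P (π ∘ₗ ψ)} =
      Nat.card {g : U →ₗ[F] W // P g} * q ^ (finrank F U * finrank F (ker π)) := by
  have hs : Surjective (LinearMap.llcomp (σ₁₂ := RingHom.id F) (σ₂₃ := RingHom.id F) (σ₁₃ := RingHom.id F) F U V W π) := by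
    intro g
    obtain ⟨h, hh⟩ := Module.projective_lifting_property π g hπ
    exact ⟨h, hh⟩
  have hmain := card_fiber (F := F) (LinearMap.llcomp (σ₁₂ := RingHom.id F) (σ₂₃ := RingHom.id F) (σ₁₃ := RingHom.id F) F U V W π) hs P
  have hrw : Nat.card {ψ : U →ₗ[F] V // P (π ∘ₗ ψ)} =
      Nat.card {a : U →ₗ[F] V // P ((LinearMap.llcomp (σ₁₂ := RingHom.id F) (σ₂₃ := RingHom.id F) (σ₁₃ := RingHom.id F) F U V W π) a)} :=
    Nat.card_congr (Equiv.subtypeEquivRight (fun ψ => Iff.rfl))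
  rw [hrw, hmain]
  congr 1
  have e : (U →ₗ[F] (ker π)) ≃ ker (LinearMap.llcomp (σ₁₂ := RingHom.id F) (σ₂₃ := RingHom.id F) (σ₁₃ := RingHom.id F) F U V W π) := by
    refine ⟨fun g => ⟨(ker π).subtype ∘ₗ g, ?_⟩, fun g => ?_, fun g => ?_, fun g => ?_⟩
    · rw [LinearMap.mem_ker]
      ext x; simpa using (g x).2
    · refine LinearMap.codRestrict (ker π) g.1 (fun x => ?_)
      rw [LinearMap.mem_ker]
      have h2 : π ∘ₗ g.1 = 0 := g.2
      have h3 := DFunLike.congr_fun h2 x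
      simpa using h3
    · ext x; simp
    · ext x; simp
  rw [← Nat.card_congr e, card_lm]

/-- nilpotency swaps across composition -/
lemma isNilpotent_comp_comm (f : V →ₗ[F] W) (g : W →ₗ[F] V) (h : IsNilpotent (g ∘ₗ f)) :
    IsNilpotent (f ∘ₗ g) := by
  obtain ⟨k, hk⟩ := h
  refine ⟨k + 1, ?_⟩
  have key : ∀ j : ℕ, (f ∘ₗ g) ^ (j + 1) = f ∘ₗ (((g ∘ₗ f) ^ j) ∘ₗ g) := by
    intro j
    induction j with
    | zero => simp [pow_succ]; rfl
    | succ j ih =>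
        rw [pow_succ, ih, pow_succ]
        ext x; simp
  rw [key k, hk]
  ext x; simp

lemma isNilpotent_conj (e : V ≃ₗ[F] W) (φ : Module.End F V) (h : IsNilpotent φ) :
    IsNilpotent (e.conj φ) := by
  obtain ⟨k, hk⟩ := h
  refine ⟨k, ?_⟩
  have : ∀ j : ℕ, (e.conj φ) ^ j = e.conj (φ ^ j) := by
    intro j
    induction j with
    | zero =>
        rw [pow_zero, pow_zero]
        ext x
        simp [LinearEquiv.conj_apply]
    | succ j ih =>
        rw [pow_succ, pow_succ, ih, Module.End.mul_eq_comp, Module.End.mul_eq_comp,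
          LinearEquiv.conj_comp]
  rw [this, hk]
  ext x; simp [LinearEquiv.conj_apply]

lemma isNilpotent_conj_iff (e : V ≃ₗ[F] W) (φ : Module.End F V) :
    IsNilpotent (e.conj φ) ↔ IsNilpotent φ := by
  refine ⟨fun h => ?_, isNilpotent_conj e φ⟩
  have h1 := isNilpotent_conj e.symm _ h
  have h2 : e.symm.conj (e.conj φ) = φ := by
    ext x; simp [LinearEquiv.conj_apply]
  rwa [h2] at h1

lemma nat_card_sigma {ι : Type*} [Fintype ι] (σ : ι → Type*) [∀ i, Finite (σ i)] :
    Nat.card (Σ i, σ i) = ∑ i, Nat.card (σ i) := by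
  have : ∀ i, Fintype (σ i) := fun i => Fintype.ofFinite _
  classical
  simp [Nat.card_eq_fintype_card, Fintype.card_sigma]

end Generic



/-- The key q-identity: `∑_{k<d} Q^{k(d-1)+C(d-k,2)} ∏_{i=k}^{d-1}(Q^{i+1}-1) = Q^{d²}-Q^{d(d-1)}`,
stated in added form. -/
lemma pure_qidentity (Q : ℚ) (d : ℕ) :
    ∑ k ∈ Finset.range d, Q ^ (k * (d-1) + (d-k).choose 2) *
      (∏ i ∈ Finset.Ico k d, (Q ^ (i+1) - 1)) + Q ^ (d * (d-1)) = Q ^ (d * d) := by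
  induction d with
  | zero => simp
  | succ d ih =>
    rcases Nat.eq_zero_or_pos d with rfl | hd
    · norm_num
    obtain ⟨d', rfl⟩ : ∃ d', d = d' + 1 := ⟨d - 1, by omega⟩
    set d := d' + 1 with hdd
    have key : ∀ k ∈ Finset.range d,
        Q ^ (k * ((d+1)-1) + ((d+1)-k).choose 2) * (∏ i ∈ Finset.Ico k (d+1), (Q ^ (i+1) - 1))
        = (Q ^ d * (Q ^ (d+1) - 1)) *
          (Q ^ (k * (d-1) + (d-k).choose 2) * (∏ i ∈ Finset.Ico k d, (Q ^ (i+1) - 1))) := by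
      intro k hk
      rw [Finset.mem_range] at hk
      have hprod : (∏ i ∈ Finset.Ico k (d+1), (Q ^ (i+1) - 1))
          = (∏ i ∈ Finset.Ico k d, (Q ^ (i+1) - 1)) * (Q ^ (d+1) - 1) :=
        Finset.prod_Ico_succ_top (le_of_lt hk) _
      have hsub : (d+1) - k = (d - k) + 1 := by omega
      have hchoose : ((d+1)-k).choose 2 = (d-k).choose 2 + (d-k) := by
        rw [hsub]
        rw [Nat.choose_succ_succ (d-k) 1]
        simp [Nat.choose_one_right, Nat.add_comm]
      have hexp : k * ((d+1)-1) + ((d+1)-k).choose 2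
          = d + (k * (d-1) + (d-k).choose 2) := by
        rw [hchoose]
        have e1 : k * ((d+1)-1) = k * (d-1) + k := by simp [hdd]; ring
        omega
      rw [hprod, hexp, pow_add]
      ring
    rw [Finset.sum_range_succ, Finset.sum_congr rfl key, ← Finset.mul_sum]
    have ih' : ∑ k ∈ Finset.range d, Q ^ (k * (d-1) + (d-k).choose 2) *
        (∏ i ∈ Finset.Ico k d, (Q ^ (i+1) - 1)) = Q ^ (d*d) - Q ^ (d*(d-1)) := by
      linarith [ih]
    rw [ih']
    have h1 : (∏ i ∈ Finset.Ico d (d+1), (Q ^ (i+1) - 1)) = Q ^ (d+1) - 1 := by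
      rw [Finset.prod_Ico_succ_top (le_refl d)]
      simp
    rw [h1]
    simp only [hdd]
    have e2 : (d' + 1 + 1) - (d' + 1) = 1 := by omega
    rw [e2]
    simp only [Nat.add_sub_cancel]
    norm_num [Nat.choose]
    ring
section Part2
variable {F : Type*} [Field F] [Fintype F]
local notation "q" => Fintype.card F

variable (F) in
noncomputable def NN (d : ℕ) : ℕ := Nat.card {φ : Module.End F (Fin d → F) // IsNilpotent φ}

variable (F) in
noncomputable def GLc (d : ℕ) : ℕ := Nat.card (GL (Fin d) F)

lemma GLc_eq (d : ℕ) : GLc F d = ∏ i : Fin d, (q ^ d - q ^ (i : ℕ)) :=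
  Matrix.card_GL_field d

lemma GLc_zero : GLc F 0 = 1 := by simp [GLc_eq]

variable {V : Type*} [AddCommGroup V] [Module F V] [FiniteDimensional F V]

instance submodule_finite : Finite (Submodule F V) := by
  have : Finite V := myFinite (inferInstance : FiniteDimensional F V)
  exact Finite.of_injective (fun (U : Submodule F V) => (U : Set V)) fun _ _ h => by
    exact SetLike.coe_injective h

lemma card_nilpotent_eq :
    Nat.card {φ : Module.End F V // IsNilpotent φ} = NN F (finrank F V) := by
  have e : V ≃ₗ[F] (Fin (finrank F V) → F) := (Module.finBasis F V).equivFun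
  have e2 : {φ : Module.End F V // IsNilpotent φ} ≃
      {ψ : Module.End F (Fin (finrank F V) → F) // IsNilpotent ψ} :=
    e.conj.toEquiv.subtypeEquiv (fun φ => (isNilpotent_conj_iff e φ).symm)
  rw [NN, Nat.card_congr e2]

lemma card_linearEquiv :
    Nat.card (V ≃ₗ[F] V) = GLc F (finrank F V) := by
  have e : V ≃ₗ[F] (Fin (finrank F V) → F) := (Module.finBasis F V).equivFun
  have e2 : (V ≃ₗ[F] V) ≃ ((Fin (finrank F V) → F) ≃ₗ[F] (Fin (finrank F V) → F)) := by
    refine ⟨fun α => (e.symm.trans α).trans e, fun β => (e.trans β).trans e.symm, fun α => ?_, fun β => ?_⟩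
    · ext x; simp
    · ext x; simp
  have e3 := (LinearMap.GeneralLinearGroup.generalLinearEquiv F (Fin (finrank F V) → F)).toEquiv
  have e4 := (Matrix.GeneralLinearGroup.toLin (n := Fin (finrank F V)) (R := F)).toEquiv
  rw [GLc, Nat.card_congr (e2.trans (e3.symm.trans e4.symm))]

/-- number of subspaces of dimension `k`, times `|GL_k|` -/
lemma card_subspaces_mul (k : ℕ) :
    Nat.card {U : Submodule F V // finrank F U = k} * GLc F k =
      ∏ i : Fin k, (q ^ (finrank F V) - q ^ (i : ℕ)) := by
  have : Finite V := myFinite (inferInstance : FiniteDimensional F V)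
  classical
  -- the map sending an independent tuple to its span
  have hspan : ∀ s : {s : Fin k → V // LinearIndependent F s},
      finrank F (span F (Set.range s.1)) = k := by
    intro s
    rw [finrank_span_eq_card s.2, Fintype.card_fin]
  set Φ : {s : Fin k → V // LinearIndependent F s} → {U : Submodule F V // finrank F U = k} :=
    fun s => ⟨span F (Set.range s.1), hspan s⟩ with hΦ
  have key : Nat.card {s : Fin k → V // LinearIndependent F s} =
      Nat.card {U : Submodule F V // finrank F U = k} * GLc F k := by
    rw [← Nat.card_congr (Equiv.sigmaFiberEquiv Φ)]
    have : Fintype {U : Submodule F V // finrank F U = k} := Fintype.ofFinite _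
    rw [nat_card_sigma]
    have hfib : ∀ U : {U : Submodule F V // finrank F U = k},
        Nat.card {s : {s : Fin k → V // LinearIndependent F s} // Φ s = U} = GLc F k := by
      intro U
      have efib : {s : {s : Fin k → V // LinearIndependent F s} // Φ s = U} ≃
          {t : Fin k → U.1 // LinearIndependent F t} := by
        refine ⟨fun s => ⟨fun i => ⟨s.1.1 i, ?_⟩, ?_⟩, fun t => ⟨⟨fun i => (t.1 i : V), ?_⟩, ?_⟩,
          fun s => ?_, fun t => ?_⟩
        · have h1 : span F (Set.range s.1.1) = U.1 := congrArg Subtype.val s.2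
          rw [← h1]
          exact Submodule.subset_span (Set.mem_range_self i)
        · exact LinearIndependent.of_comp U.1.subtype (by
            convert s.1.2 using 1; rfl)
        · exact (t.2.map' U.1.subtype U.1.ker_subtype)
        · refine Subtype.ext ?_
          have hle : span F (Set.range (fun i => (t.1 i : V))) ≤ U.1 := by
            rw [Submodule.span_le]
            rintro x ⟨i, rfl⟩
            exact (t.1 i).2
          refine Submodule.eq_of_le_of_finrank_eq hle ?_
          rw [U.2]
          exact hspan _
        · exact Subtype.ext (Subtype.ext rfl)
        · exact Subtype.ext (funext fun i => Subtype.ext rfl)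
      rw [Nat.card_congr efib]
      have : FiniteDimensional F U.1 := inferInstance
      rw [card_linearIndependent (V := U.1) (by rw [U.2]), GLc_eq]
      apply Finset.prod_congr rfl
      intro i _
      rw [U.2]
    rw [Finset.sum_congr rfl (fun U _ => hfib U), Finset.sum_const, Finset.card_univ, smul_eq_mul]
    rw [← Nat.card_eq_fintype_card]
  rcases le_or_gt k (finrank F V) with hk | hk
  · rw [← key, card_linearIndependent hk]
  · -- k > dim: both sides are zero
    have h1 : Nat.card {U : Submodule F V // finrank F U = k} = 0 := by
      rw [Nat.card_eq_zero]
      left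
      refine ⟨?_⟩
      rintro ⟨U, hU⟩
      have := Submodule.finrank_le U
      omega
    rw [h1, zero_mul]
    symm
    apply Finset.prod_eq_zero (Finset.mem_univ (⟨finrank F V, hk⟩ : Fin k))
    simp

lemma card_retractions (U : Submodule F V) :
    Nat.card {f : V →ₗ[F] U // ∀ x : U, f x = x} =
      q ^ ((finrank F V - finrank F U) * finrank F U) := by
  have : Finite V := myFinite (inferInstance : FiniteDimensional F V)
  obtain ⟨W₀, hW₀⟩ := Submodule.exists_isCompl U
  set π₀ := U.linearProjOfIsCompl W₀ hW₀ with hπ₀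
  have e : {f : V →ₗ[F] U // ∀ x : U, f x = x} ≃ {h : V →ₗ[F] U // U ≤ ker h} := by
    refine ⟨fun f => ⟨f.1 - π₀, fun x hx => ?_⟩, fun h => ⟨h.1 + π₀, fun x => ?_⟩,
      fun f => ?_, fun h => ?_⟩
    · rw [mem_ker, LinearMap.sub_apply]
      have h1 : f.1 x = ⟨x, hx⟩ := f.2 ⟨x, hx⟩
      have h2 : π₀ x = ⟨x, hx⟩ := Submodule.linearProjOfIsCompl_apply_left hW₀ ⟨x, hx⟩
      rw [h1, h2, sub_self]
    · have h1 : h.1 ↑x = 0 := h.2 x.2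
      have h2 : π₀ ↑x = x := Submodule.linearProjOfIsCompl_apply_left hW₀ x
      rw [LinearMap.add_apply, h1, h2, zero_add]
    · refine Subtype.ext ?_; simp
    · refine Subtype.ext ?_; simp
  rw [Nat.card_congr e]
  have := card_vanish (F := F) (V := V) (W := U) U
  rw [this]

lemma card_compl_subspaces (U : Submodule F V) :
    Nat.card {W : Submodule F V // IsCompl U W} =
      q ^ ((finrank F V - finrank F U) * finrank F U) := by
  rw [Nat.card_congr (U.isComplEquivProj), card_retractions]

end Part2
section Fitting
variable {F : Type*} [Field F] [Fintype F]
local notation "q" => Fintype.card F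
variable {V : Type*} [AddCommGroup V] [Module F V] [FiniteDimensional F V]

/-- eventual kernel -/
noncomputable def Ue (φ : Module.End F V) : Submodule F V := ⨆ n : ℕ, ker (φ ^ n)
/-- eventual range -/
noncomputable def We (φ : Module.End F V) : Submodule F V := ⨅ n : ℕ, range (φ ^ n)

lemma exists_stab (φ : Module.End F V) : ∃ N, Ue φ = ker (φ ^ N) ∧ We φ = range (φ ^ N) := by
  obtain ⟨N, hN⟩ := (φ.eventually_iSup_ker_pow_eq.and φ.eventually_iInf_range_pow_eq).exists
  exact ⟨N, hN.1, hN.2⟩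

lemma isCompl_Ue_We (φ : Module.End F V) : IsCompl (Ue φ) (We φ) :=
  LinearMap.isCompl_iSup_ker_pow_iInf_range_pow φ

lemma mapsTo_Ue (φ : Module.End F V) : ∀ x ∈ Ue φ, φ x ∈ Ue φ := by
  intro x hx
  obtain ⟨N, hN, -⟩ := exists_stab φ
  rw [hN] at hx ⊢
  rw [mem_ker] at hx ⊢
  have : (φ ^ N) (φ x) = φ ((φ ^ N) x) := by
    rw [← Module.End.mul_apply, ← Module.End.mul_apply, ← pow_succ, ← pow_succ']
  rw [this, hx, map_zero]

lemma mapsTo_We (φ : Module.End F V) : ∀ x ∈ We φ, φ x ∈ We φ := by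
  intro x hx
  rw [We, Submodule.mem_iInf] at hx ⊢
  intro n
  obtain ⟨y, hy⟩ := hx n
  refine ⟨φ y, ?_⟩
  have h1 : (φ ^ n) (φ y) = φ ((φ ^ n) y) := by
    rw [← Module.End.mul_apply, ← Module.End.mul_apply, ← pow_succ, ← pow_succ']
  rw [h1, hy]

lemma ker_le_Ue (φ : Module.End F V) : ker φ ≤ Ue φ := by
  have : ker φ = ker (φ ^ 1) := by rw [pow_one]
  rw [this]
  exact le_iSup (fun n => ker (φ ^ n)) 1

variable {U W : Submodule F V}

/-- glue a nilpotent endo of `U` and an automorphism of `W` -/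
noncomputable def glue (hc : IsCompl U W) (a : Module.End F U) (b : W →ₗ[F] W) :
    Module.End F V :=
  U.subtype ∘ₗ a ∘ₗ (U.projectionOnto W hc) +
    W.subtype ∘ₗ b ∘ₗ (W.projectionOnto U hc.symm)

lemma glue_apply_left (hc : IsCompl U W) (a : Module.End F U) (b : W →ₗ[F] W) (u : U) :
    glue hc a b ↑u = ↑(a u) := by
  simp [glue, Submodule.projectionOnto_apply_left, Submodule.projectionOnto_apply_right]

lemma glue_apply_right (hc : IsCompl U W) (a : Module.End F U) (b : W →ₗ[F] W) (w : W) :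
    glue hc a b ↑w = ↑(b w) := by
  simp [glue, Submodule.projectionOnto_apply_left, Submodule.projectionOnto_apply_right]

lemma glue_pow_left (hc : IsCompl U W) (a : Module.End F U) (b : W →ₗ[F] W) (i : ℕ) (u : U) :
    (glue hc a b ^ i) ↑u = ↑((a ^ i) u) := by
  induction i with
  | zero => simp
  | succ i ih =>
      rw [pow_succ', pow_succ', Module.End.mul_apply, Module.End.mul_apply, ih,
        glue_apply_left hc a b]

lemma glue_pow_right (hc : IsCompl U W) (a : Module.End F U) (b : W →ₗ[F] W) (i : ℕ) (w : W) :
    (glue hc a b ^ i) ↑w = ↑((b ^ i) w) := by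
  induction i with
  | zero => simp
  | succ i ih =>
      rw [pow_succ', pow_succ', Module.End.mul_apply, Module.End.mul_apply, ih,
        glue_apply_right hc a b]

lemma bpow_inj (b : W ≃ₗ[F] W) (i : ℕ) :
    Function.Injective ⇑((b : W →ₗ[F] W) ^ i) := by
  induction i with
  | zero => intro x y h; simpa using h
  | succ i ih =>
      intro x y h
      rw [pow_succ, Module.End.mul_apply, Module.End.mul_apply] at h
      exact b.injective (ih h)

lemma bpow_surj (b : W ≃ₗ[F] W) (i : ℕ) :
    Function.Surjective ⇑((b : W →ₗ[F] W) ^ i) := by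
  induction i with
  | zero => intro y; exact ⟨y, by simp⟩
  | succ i ih =>
      intro y
      obtain ⟨z, hz⟩ := ih y
      refine ⟨b.symm z, ?_⟩
      rw [pow_succ, Module.End.mul_apply]
      simpa using hz

lemma glue_Ue (hc : IsCompl U W) (a : Module.End F U) (ha : IsNilpotent a) (b : W ≃ₗ[F] W) :
    Ue (glue hc a (b : W →ₗ[F] W)) = U := by
  obtain ⟨N, hN⟩ := ha
  apply le_antisymm
  · -- Ue ≤ U
    refine iSup_le fun i => ?_
    intro x hx
    rw [mem_ker] at hx
    have hx' : x ∈ U ⊔ W := by rw [hc.sup_eq_top]; trivial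
    obtain ⟨u, hu, w, hw, rfl⟩ := Submodule.mem_sup.mp hx'
    have hdec : (glue hc a (b : W →ₗ[F] W) ^ i) (u + w)
        = ↑((a ^ i) ⟨u, hu⟩) + ↑(((b : W →ₗ[F] W) ^ i) ⟨w, hw⟩) := by
      rw [map_add]
      rw [glue_pow_left hc a _ i ⟨u, hu⟩, glue_pow_right hc a _ i ⟨w, hw⟩]
    rw [hdec] at hx
    -- the two components lie in complementary subspaces
    have h1 : (((a ^ i) ⟨u, hu⟩ : U) : V) = - ((((b : W →ₗ[F] W) ^ i) ⟨w, hw⟩ : W) : V) := by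
      exact eq_neg_of_add_eq_zero_left hx
    have h2 : (((a ^ i) ⟨u, hu⟩ : U) : V) = 0 := by
      have hmem : (((a ^ i) ⟨u, hu⟩ : U) : V) ∈ U ⊓ W := by
        constructor
        · exact ((a ^ i) ⟨u, hu⟩).2
        · rw [h1]; exact neg_mem (((b : W →ₗ[F] W) ^ i) ⟨w, hw⟩).2
      rw [hc.inf_eq_bot] at hmem
      exact hmem
    have h3 : (((b : W →ₗ[F] W) ^ i) ⟨w, hw⟩ : W) = 0 := by
      have := hx
      rw [h2, zero_add] at this
      exact Subtype.ext this
    have h4 : (⟨w, hw⟩ : W) = 0 := bpow_inj b i (by rw [h3, map_zero])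
    have hw0 : w = 0 := congrArg Subtype.val h4
    rw [hw0, add_zero]
    exact hu
  · -- U ≤ Ue
    intro x hx
    have : (glue hc a (b : W →ₗ[F] W) ^ N) x = 0 := by
      have := glue_pow_left hc a (b : W →ₗ[F] W) N ⟨x, hx⟩
      rw [hN] at this
      simpa using this
    have hxk : x ∈ ker (glue hc a (b : W →ₗ[F] W) ^ N) := this
    exact le_iSup (fun n => ker ((glue hc a (b : W →ₗ[F] W)) ^ n)) N hxk

lemma glue_We (hc : IsCompl U W) (a : Module.End F U) (ha : IsNilpotent a) (b : W ≃ₗ[F] W) :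
    We (glue hc a (b : W →ₗ[F] W)) = W := by
  obtain ⟨N, hN⟩ := ha
  apply le_antisymm
  · -- We ≤ W
    refine le_trans (iInf_le _ N) ?_
    rintro x ⟨y, rfl⟩
    have hy : y ∈ U ⊔ W := by rw [hc.sup_eq_top]; trivial
    obtain ⟨u, hu, w, hw, rfl⟩ := Submodule.mem_sup.mp hy
    rw [map_add, glue_pow_left hc a _ N ⟨u, hu⟩, glue_pow_right hc a _ N ⟨w, hw⟩, hN]
    simpa using (((b : W →ₗ[F] W) ^ N) ⟨w, hw⟩).2
  · -- W ≤ We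
    refine le_iInf fun i => ?_
    intro x hx
    obtain ⟨z, hz⟩ := bpow_surj b i ⟨x, hx⟩
    exact ⟨↑z, by rw [glue_pow_right hc a _ i z, hz]⟩

end Fitting
section Fitting2
variable {F : Type*} [Field F] [Fintype F]
local notation "q" => Fintype.card F
variable {V : Type*} [AddCommGroup V] [Module F V] [FiniteDimensional F V]
variable {U W : Submodule F V}

lemma memU (φ : Module.End F V) (hU : Ue φ = U) : ∀ x ∈ U, φ x ∈ U := by
  intro x hx
  rw [← hU] at hx ⊢
  exact mapsTo_Ue φ x hx

lemma memW (φ : Module.End F V) (hW : We φ = W) : ∀ x ∈ W, φ x ∈ W := by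
  intro x hx
  rw [← hW] at hx ⊢
  exact mapsTo_We φ x hx

lemma restU_nilp (φ : Module.End F V) (hU : Ue φ = U) :
    IsNilpotent (φ.restrict (memU φ hU)) := by
  obtain ⟨N, hN, -⟩ := exists_stab φ
  refine ⟨N, ?_⟩
  rw [Module.End.pow_restrict]
  apply LinearMap.ext
  intro u
  apply Subtype.ext
  rw [LinearMap.restrict_coe_apply]
  have hu : (u : V) ∈ ker (φ ^ N) := by
    rw [← hN, hU]; exact u.2
  simpa using hu

noncomputable def restU (φ : Module.End F V) (hU : Ue φ = U) :
    {a : Module.End F U // IsNilpotent a} := ⟨φ.restrict (memU φ hU), restU_nilp φ hU⟩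

lemma restU_coe_apply (φ : Module.End F V) (hU : Ue φ = U) (u : U) :
    (((restU φ hU).1 u : U) : V) = φ ↑u := by
  simp only [restU, LinearMap.restrict_coe_apply]

lemma restW_inj (φ : Module.End F V) (hU : Ue φ = U) (hW : We φ = W) :
    Function.Injective ⇑(φ.restrict (memW φ hW)) := by
  intro x y h
  have h2 : φ (x : V) = φ (y : V) := by
    have := congrArg (Subtype.val) h
    rwa [LinearMap.restrict_coe_apply, LinearMap.restrict_coe_apply] at this
  have h3 : (x : V) - y ∈ ker φ := by
    rw [mem_ker, map_sub, h2, sub_self]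
  have h4 : (x : V) - y ∈ U := by
    rw [← hU]; exact ker_le_Ue φ h3
  have hc : IsCompl U W := by rw [← hU, ← hW]; exact isCompl_Ue_We φ
  have h5 : (x : V) - y ∈ U ⊓ W := ⟨h4, sub_mem x.2 y.2⟩
  rw [hc.inf_eq_bot] at h5
  apply Subtype.ext
  have h6 : (x : V) - y = 0 := h5
  have h7 : (x : V) = y := by
    have := sub_eq_zero.mp h6
    exact this
  exact h7

noncomputable def restW (φ : Module.End F V) (hU : Ue φ = U) (hW : We φ = W) :
    W ≃ₗ[F] W :=
  LinearEquiv.ofBijective (φ.restrict (memW φ hW))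
    ⟨restW_inj φ hU hW, LinearMap.injective_iff_surjective.mp (restW_inj φ hU hW)⟩

lemma restW_coe_apply (φ : Module.End F V) (hU : Ue φ = U) (hW : We φ = W) (w : W) :
    ((restW φ hU hW w : W) : V) = φ ↑w := by
  rfl

noncomputable def fitFiber (hc : IsCompl U W) :
    {φ : Module.End F V // Ue φ = U ∧ We φ = W} ≃
      ({a : Module.End F U // IsNilpotent a} × (W ≃ₗ[F] W)) where
  toFun x := (restU x.1 x.2.1, restW x.1 x.2.1 x.2.2)
  invFun ab := ⟨glue hc ab.1.1 (ab.2 : W →ₗ[F] W),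
    glue_Ue hc ab.1.1 ab.1.2 ab.2, glue_We hc ab.1.1 ab.1.2 ab.2⟩
  left_inv x := by
    apply Subtype.ext
    apply LinearMap.ext
    intro v
    have hv : v ∈ U ⊔ W := by rw [hc.sup_eq_top]; trivial
    obtain ⟨u, hu, w, hw, rfl⟩ := Submodule.mem_sup.mp hv
    rw [map_add, map_add]
    congr 1
    · have h1 := glue_apply_left hc (restU x.1 x.2.1).1 ((restW x.1 x.2.1 x.2.2 : W →ₗ[F] W)) ⟨u, hu⟩
      rw [h1, restU_coe_apply]
    · have h1 := glue_apply_right hc (restU x.1 x.2.1).1 ((restW x.1 x.2.1 x.2.2 : W →ₗ[F] W)) ⟨w, hw⟩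
      rw [h1]
      simp only [LinearEquiv.coe_coe, restW_coe_apply]
  right_inv ab := by
    dsimp only
    refine Prod.ext ?_ ?_
    · apply Subtype.ext
      apply LinearMap.ext
      intro u
      apply Subtype.ext
      rw [restU_coe_apply]
      exact glue_apply_left hc ab.1.1 (ab.2 : W →ₗ[F] W) u
    · apply LinearEquiv.ext
      intro w
      apply Subtype.ext
      rw [restW_coe_apply]
      exact glue_apply_right hc ab.1.1 (ab.2 : W →ₗ[F] W) w

lemma card_end_eq :
    Nat.card (Module.End F V) = ∑ k ∈ Finset.range (finrank F V + 1),
      (Nat.card {U : Submodule F V // finrank F U = k} * q ^ ((finrank F V - k) * k)) *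
        (NN F k * GLc F (finrank F V - k)) := by
  classical
  have hfinV : Finite V := myFinite (inferInstance : FiniteDimensional F V)
  set d := finrank F V with hd
  set Cc := {p : Submodule F V × Submodule F V // IsCompl p.1 p.2} with hCc
  have : Finite Cc := by
    rw [hCc]; infer_instance
  have : Fintype Cc := Fintype.ofFinite _
  set Ψ : Module.End F V → Cc := fun φ => ⟨(Ue φ, We φ), isCompl_Ue_We φ⟩ with hΨ
  have e1 : Module.End F V ≃ Σ p : Cc, {φ : Module.End F V // Ψ φ = p} :=
    (Equiv.sigmaFiberEquiv Ψ).symm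
  have e2 : ∀ p : Cc, {φ : Module.End F V // Ψ φ = p} ≃
      ({a : Module.End F p.1.1 // IsNilpotent a} × (p.1.2 ≃ₗ[F] p.1.2)) := by
    intro p
    refine (Equiv.subtypeEquivRight ?_).trans (fitFiber p.2)
    intro φ
    rw [hΨ]
    constructor
    · intro h
      have := congrArg (Subtype.val) h
      exact ⟨congrArg Prod.fst this, congrArg Prod.snd this⟩
    · rintro ⟨h1, h2⟩
      exact Subtype.ext (Prod.ext h1 h2)
  have hcards : ∀ p : Cc, Nat.card ({a : Module.End F p.1.1 // IsNilpotent a} × (p.1.2 ≃ₗ[F] p.1.2))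
      = NN F (finrank F p.1.1) * GLc F (d - finrank F p.1.1) := by
    intro p
    rw [Nat.card_prod, card_nilpotent_eq, card_linearEquiv]
    have := Submodule.finrank_add_eq_of_isCompl p.2
    have h2 : finrank F p.1.2 = d - finrank F p.1.1 := by omega
    rw [h2]
  have main : Nat.card (Module.End F V) = ∑ p : Cc, NN F (finrank F p.1.1) * GLc F (d - finrank F p.1.1) := by
    rw [Nat.card_congr (e1.trans (Equiv.sigmaCongrRight e2)), nat_card_sigma]
    exact Finset.sum_congr rfl (fun p _ => hcards p)
  rw [main]
  -- group by dimension
  have hmaps : ∀ p : Cc, p ∈ Finset.univ → finrank F p.1.1 ∈ Finset.range (d + 1) := by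
    intro p _
    rw [Finset.mem_range]
    have := Submodule.finrank_le p.1.1
    omega
  rw [← Finset.sum_fiberwise_of_maps_to hmaps (fun p => NN F (finrank F p.1.1) * GLc F (d - finrank F p.1.1))]
  apply Finset.sum_congr rfl
  intro k hk
  have hinner : ∀ p ∈ Finset.univ.filter (fun p : Cc => finrank F p.1.1 = k),
      NN F (finrank F p.1.1) * GLc F (d - finrank F p.1.1) = NN F k * GLc F (d - k) := by
    intro p hp
    rw [Finset.mem_filter] at hp
    rw [hp.2]
  rw [Finset.sum_congr rfl hinner, Finset.sum_const, smul_eq_mul]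
  have hcnt : (Finset.univ.filter (fun p : Cc => finrank F p.1.1 = k)).card
      = Nat.card {U : Submodule F V // finrank F U = k} * q ^ ((d - k) * k) := by
    rw [← Fintype.card_subtype]
    rw [← Nat.card_eq_fintype_card]
    have egrp : {p : Cc // finrank F p.1.1 = k} ≃
        Σ Us : {Us : Submodule F V // finrank F Us = k}, {Ws : Submodule F V // IsCompl Us.1 Ws} := by
      refine ⟨fun p => ⟨⟨p.1.1.1, p.2⟩, ⟨p.1.1.2, p.1.2⟩⟩,
        fun x => ⟨⟨(x.1.1, x.2.1), x.2.2⟩, x.1.2⟩, fun p => rfl, fun x => rfl⟩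
    have : Fintype {Us : Submodule F V // finrank F Us = k} := Fintype.ofFinite _
    rw [Nat.card_congr egrp, nat_card_sigma]
    have hconst : ∀ Us : {Us : Submodule F V // finrank F Us = k},
        Nat.card {Ws : Submodule F V // IsCompl Us.1 Ws} = q ^ ((d - k) * k) := by
      intro Us
      rw [card_compl_subspaces, Us.2]
    rw [Finset.sum_congr rfl (fun Us _ => hconst Us), Finset.sum_const, smul_eq_mul,
      Finset.card_univ, ← Nat.card_eq_fintype_card]
  rw [hcnt]

end Fitting2
section FH
variable {F : Type*} [Field F] [Fintype F]
local notation "q" => Fintype.card F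

lemma sum_range_id_choose (j : ℕ) : ∑ i ∈ Finset.range j, i = j.choose 2 := by
  induction j with
  | zero => rfl
  | succ j ih =>
      rw [Finset.sum_range_succ, ih, Nat.choose_succ_succ j 1, Nat.choose_one_right, Nat.add_comm]

lemma glq (j : ℕ) : ((GLc F j : ℕ) : ℚ) =
    (q : ℚ) ^ (j.choose 2) * ∏ i ∈ Finset.range j, ((q : ℚ) ^ (i+1) - 1) := by
  have hq1 : 1 ≤ q := Fintype.card_pos
  rw [GLc_eq]
  push_cast [Nat.cast_prod]
  rw [Fin.prod_univ_eq_prod_range (fun i => ((q ^ j - q ^ i : ℕ) : ℚ)) j]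
  have step1 : ∀ i ∈ Finset.range j, ((q ^ j - q ^ i : ℕ) : ℚ)
      = (q : ℚ) ^ i * ((q : ℚ) ^ (j - i) - 1) := by
    intro i hi
    rw [Finset.mem_range] at hi
    rw [Nat.cast_sub (Nat.pow_le_pow_right hq1 (le_of_lt hi))]
    push_cast
    rw [mul_sub, mul_one, ← pow_add]
    congr 2
    omega
  rw [Finset.prod_congr rfl step1, Finset.prod_mul_distrib, Finset.prod_pow_eq_pow_sum,
    sum_range_id_choose]
  congr 1
  rw [← Finset.prod_range_reflect (fun i => ((q:ℚ) ^ (i+1) - 1)) j]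
  apply Finset.prod_congr rfl
  intro i hi
  rw [Finset.mem_range] at hi
  congr 2
  omega

lemma pinjq (d k : ℕ) (hk : k ≤ d) : ((∏ i : Fin k, (q ^ d - q ^ (i : ℕ)) : ℕ) : ℚ) =
    (q : ℚ) ^ (k.choose 2) * ∏ i ∈ Finset.Ico (d - k) d, ((q : ℚ) ^ (i+1) - 1) := by
  have hq1 : 1 ≤ q := Fintype.card_pos
  push_cast [Nat.cast_prod]
  rw [Fin.prod_univ_eq_prod_range (fun i => ((q ^ d - q ^ i : ℕ) : ℚ)) k]
  have step1 : ∀ i ∈ Finset.range k, ((q ^ d - q ^ i : ℕ) : ℚ)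
      = (q : ℚ) ^ i * ((q : ℚ) ^ (d - i) - 1) := by
    intro i hi
    rw [Finset.mem_range] at hi
    rw [Nat.cast_sub (Nat.pow_le_pow_right hq1 (by omega))]
    push_cast
    rw [mul_sub, mul_one, ← pow_add]
    congr 2
    omega
  rw [Finset.prod_congr rfl step1, Finset.prod_mul_distrib, Finset.prod_pow_eq_pow_sum,
    sum_range_id_choose]
  congr 1
  rw [Finset.prod_Ico_eq_prod_range]
  have h2 : d - (d - k) = k := by omega
  rw [h2]
  rw [← Finset.prod_range_reflect (fun i => ((q:ℚ) ^ (d - k + i + 1) - 1)) k]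
  apply Finset.prod_congr rfl
  intro i hi
  rw [Finset.mem_range] at hi
  congr 2
  omega

lemma GLc_ne_zero (j : ℕ) : ((GLc F j : ℕ) : ℚ) ≠ 0 := by
  have : 0 < GLc F j := Nat.card_pos
  positivity

lemma uprod_ne_zero (j : ℕ) : (∏ i ∈ Finset.range j, ((q : ℚ) ^ (i+1) - 1)) ≠ 0 := by
  intro h
  apply GLc_ne_zero (F := F) j
  rw [glq, h, mul_zero]

lemma card_subspaces_top {V : Type*} [AddCommGroup V] [Module F V] [FiniteDimensional F V] :
    Nat.card {U : Submodule F V // finrank F U = finrank F V} = 1 := by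
  rw [Nat.card_eq_one_iff_unique]
  constructor
  · refine ⟨fun U U' => ?_⟩
    apply Subtype.ext
    rw [Submodule.eq_top_of_finrank_eq U.2, Submodule.eq_top_of_finrank_eq U'.2]
  · exact ⟨⊤, finrank_top F V⟩

/-- Fine–Herstein: the number of nilpotent endomorphisms of `F^d` is `q^(d²-d)`. -/
theorem NN_mul_eq (d : ℕ) : (NN F d : ℚ) * (q : ℚ) ^ d = (q : ℚ) ^ (d * d) := by
  induction d using Nat.strong_induction_on with
  | _ d IH =>
  have hq0 : ((q : ℕ) : ℚ) ≠ 0 := by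
    have : 1 ≤ q := Fintype.card_pos
    positivity
  have hrank : finrank F (Fin d → F) = d := by
    rw [Module.finrank_fintype_fun_eq_card, Fintype.card_fin]
  -- the master counting identity over ℕ
  have E1 := card_end_eq (F := F) (V := Fin d → F)
  rw [hrank] at E1
  have hlhs : Nat.card (Module.End F (Fin d → F)) = q ^ (d * d) := by
    rw [card_lm, hrank]
  rw [hlhs] at E1
  -- cast to ℚ
  have E2 : ((q : ℚ)) ^ (d * d) = ∑ k ∈ Finset.range (d + 1),
      ((Nat.card {U : Submodule F (Fin d → F) // finrank F U = k} : ℚ) * (q : ℚ) ^ ((d - k) * k)) *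
        ((NN F k : ℚ) * (GLc F (d - k) : ℚ)) := by
    have := congrArg (fun n : ℕ => (n : ℚ)) E1
    push_cast at this
    convert this using 2
  rw [Finset.sum_range_succ] at E2
  -- the top term equals NN F d
  have htop : ((Nat.card {U : Submodule F (Fin d → F) // finrank F U = d} : ℚ) *
      (q : ℚ) ^ ((d - d) * d)) * ((NN F d : ℚ) * (GLc F (d - d) : ℚ)) = (NN F d : ℚ) := by
    have h1 : Nat.card {U : Submodule F (Fin d → F) // finrank F U = d} = 1 := by
      have := card_subspaces_top (F := F) (V := Fin d → F)
      rwa [hrank] at this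
    rw [h1, Nat.sub_self, zero_mul, pow_zero, GLc_zero]
    norm_num
  rw [htop] at E2
  -- each small term matches the pure identity summand
  have hterm : ∀ k ∈ Finset.range d,
      ((Nat.card {U : Submodule F (Fin d → F) // finrank F U = k} : ℚ) * (q : ℚ) ^ ((d - k) * k)) *
        ((NN F k : ℚ) * (GLc F (d - k) : ℚ))
      = (q : ℚ) ^ (k * (d-1) + (d-k).choose 2) * ∏ i ∈ Finset.Ico k d, ((q:ℚ) ^ (i+1) - 1) := by
    intro k hk
    rw [Finset.mem_range] at hk
    have hkd : k ≤ d := le_of_lt hk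
    apply mul_right_cancel₀ (GLc_ne_zero (F := F) k)
    apply mul_right_cancel₀ (pow_ne_zero k hq0)
    -- LHS * GLc k * q^k
    have hsub : ((Nat.card {U : Submodule F (Fin d → F) // finrank F U = k} : ℚ) * (GLc F k : ℚ))
        = ((∏ i : Fin k, (q ^ d - q ^ (i : ℕ)) : ℕ) : ℚ) := by
      have := card_subspaces_mul (F := F) (V := Fin d → F) k
      rw [hrank] at this
      have := congrArg (fun n : ℕ => (n : ℚ)) this
      push_cast at this
      rw [Nat.cast_prod]
      exact this
    have hIH := IH k hk
    calc ((Nat.card {U : Submodule F (Fin d → F) // finrank F U = k} : ℚ) * (q : ℚ) ^ ((d - k) * k)) *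
        ((NN F k : ℚ) * (GLc F (d - k) : ℚ)) * (GLc F k : ℚ) * (q : ℚ) ^ k
        = ((Nat.card {U : Submodule F (Fin d → F) // finrank F U = k} : ℚ) * (GLc F k : ℚ)) *
          ((NN F k : ℚ) * (q : ℚ) ^ k) * ((q : ℚ) ^ ((d - k) * k)) * (GLc F (d - k) : ℚ) := by ring
      _ = ((q : ℚ) ^ (k.choose 2) * ∏ i ∈ Finset.Ico (d - k) d, ((q : ℚ) ^ (i+1) - 1)) *
          ((q : ℚ) ^ (k * k)) * ((q : ℚ) ^ ((d - k) * k)) *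
          ((q : ℚ) ^ ((d-k).choose 2) * ∏ i ∈ Finset.range (d - k), ((q : ℚ) ^ (i+1) - 1)) := by
            rw [hsub, pinjq d k hkd, hIH, glq]
      _ = (q : ℚ) ^ (k.choose 2 + k * k + (d - k) * k + (d-k).choose 2) *
          ((∏ i ∈ Finset.range (d - k), ((q : ℚ) ^ (i+1) - 1)) *
            ∏ i ∈ Finset.Ico (d - k) d, ((q : ℚ) ^ (i+1) - 1)) := by
            rw [pow_add, pow_add, pow_add]; ring
      _ = (q : ℚ) ^ (k.choose 2 + k * k + (d - k) * k + (d-k).choose 2) *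
          ∏ i ∈ Finset.range d, ((q : ℚ) ^ (i+1) - 1) := by
            rw [Finset.prod_range_mul_prod_Ico _ (by omega : d - k ≤ d)]
      _ = ((q : ℚ) ^ (k * (d-1) + (d-k).choose 2) * ∏ i ∈ Finset.Ico k d, ((q:ℚ) ^ (i+1) - 1)) *
          (GLc F k : ℚ) * (q : ℚ) ^ k := by
            rw [glq]
            rw [← Finset.prod_range_mul_prod_Ico (fun i => ((q:ℚ) ^ (i+1) - 1)) hkd]
            have hexp : k.choose 2 + k * k + (d - k) * k + (d-k).choose 2
                = (k * (d-1) + (d-k).choose 2) + k.choose 2 + k := by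
              have h1 : k * k + (d - k) * k = k * d := by
                rw [← add_mul, Nat.add_sub_cancel' hkd, mul_comm]
              have h2 : k * (d - 1) + k = k * d := by
                have h3 : d - 1 + 1 = d := by omega
                calc k * (d - 1) + k = k * ((d - 1) + 1) := by ring
                  _ = k * d := by rw [h3]
              omega
            rw [hexp, pow_add, pow_add]
            ring
  rw [Finset.sum_congr rfl hterm] at E2
  have hpure := pure_qidentity (q : ℚ) d
  -- conclude NN F d = q^(d*(d-1))
  have hNN : (NN F d : ℚ) = (q : ℚ) ^ (d * (d-1)) := by linarith
  rw [hNN, ← pow_add]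
  congr 1
  rcases Nat.eq_zero_or_pos d with rfl | hd
  · rfl
  · have : d - 1 + 1 = d := by omega
    calc d * (d-1) + d = d * ((d-1) + 1) := by ring
      _ = d * d := by rw [this]

end FH
section Main
variable {F : Type*} [Field F] [Fintype F]
local notation "q" => Fintype.card F
variable {V W : Type*} [AddCommGroup V] [Module F V] [FiniteDimensional F V]
  [AddCommGroup W] [Module F W] [FiniteDimensional F W]

lemma NN_mul_eq_nat (d : ℕ) : NN F d * q ^ d = q ^ (d * d) := by
  have := NN_mul_eq (F := F) d
  exact_mod_cast this

lemma nilp_swap_iff (f : V →ₗ[F] W) (g : W →ₗ[F] V) :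
    IsNilpotent (g ∘ₗ f) ↔
      IsNilpotent ((f.rangeRestrict ∘ₗ g) ∘ₗ (LinearMap.range f).subtype) := by
  have hdec : (g ∘ₗ f) = (g ∘ₗ (LinearMap.range f).subtype) ∘ₗ f.rangeRestrict := by
    ext x; simp
  constructor
  · intro h
    rw [hdec] at h
    have h2 := isNilpotent_comp_comm f.rangeRestrict (g ∘ₗ (LinearMap.range f).subtype) h
    rwa [← LinearMap.comp_assoc] at h2
  · intro h
    rw [LinearMap.comp_assoc] at h
    have h2 := isNilpotent_comp_comm (g ∘ₗ (LinearMap.range f).subtype) f.rangeRestrict h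
    rwa [← hdec] at h2

lemma count_pre (R : Submodule F W) :
    Nat.card {ψ : W →ₗ[F] R // IsNilpotent (ψ ∘ₗ R.subtype)} =
      NN F (finrank F R) * q ^ ((finrank F W - finrank F R) * finrank F R) := by
  have hsurj : Function.Surjective ⇑(LinearMap.lcomp F R R.subtype) := by
    intro a
    obtain ⟨π₀, hπ₀⟩ := R.subtype.exists_leftInverse_of_injective R.ker_subtype
    refine ⟨a ∘ₗ π₀, ?_⟩
    have : (a ∘ₗ π₀) ∘ₗ R.subtype = a ∘ₗ (π₀ ∘ₗ R.subtype) := by rw [LinearMap.comp_assoc]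
    show (a ∘ₗ π₀) ∘ₗ R.subtype = a
    rw [this, hπ₀, LinearMap.comp_id]
  have hmain := card_fiber (F := F) (LinearMap.lcomp F R R.subtype) hsurj
    (fun a : Module.End F R => IsNilpotent a)
  have hrw : Nat.card {ψ : W →ₗ[F] R // IsNilpotent (ψ ∘ₗ R.subtype)} =
      Nat.card {ψ : W →ₗ[F] R // IsNilpotent ((LinearMap.lcomp F R R.subtype) ψ)} :=
    Nat.card_congr (Equiv.subtypeEquivRight (fun ψ => Iff.rfl))
  rw [hrw, hmain, card_nilpotent_eq]
  congr 1
  have eker : (LinearMap.ker (LinearMap.lcomp F R R.subtype) : Type _) ≃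
      {ψ : W →ₗ[F] R // R ≤ LinearMap.ker ψ} := by
    refine Equiv.subtypeEquivRight ?_
    intro ψ
    rw [LinearMap.mem_ker]
    constructor
    · intro h x hx
      rw [LinearMap.mem_ker]
      have := DFunLike.congr_fun h ⟨x, hx⟩
      simpa using this
    · intro h
      apply LinearMap.ext
      intro x
      have := h x.2
      rw [LinearMap.mem_ker] at this
      simpa using this
  rw [Nat.card_congr eker, card_vanish]

lemma count_nilp_fixed (f : V →ₗ[F] W) :
    Nat.card {g : W →ₗ[F] V // IsNilpotent (g ∘ₗ f)} * q ^ (finrank F (LinearMap.range f)) =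
      q ^ (finrank F W * finrank F V) := by
  set R := LinearMap.range f with hR
  set r := finrank F R with hr
  have hrn : r ≤ finrank F W := Submodule.finrank_le R
  have hrm : r ≤ finrank F V := by
    rw [hr, hR]
    have := LinearMap.finrank_range_add_finrank_ker f
    omega
  have hkerf : finrank F (LinearMap.ker f) = finrank F V - r := by
    rw [hr, hR]
    have := LinearMap.finrank_range_add_finrank_ker f
    omega
  have e0 : Nat.card {g : W →ₗ[F] V // IsNilpotent (g ∘ₗ f)} =
      Nat.card {g : W →ₗ[F] V //
        (fun ψ : W →ₗ[F] R => IsNilpotent (ψ ∘ₗ R.subtype)) (f.rangeRestrict ∘ₗ g)} :=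
    Nat.card_congr (Equiv.subtypeEquivRight (fun g => nilp_swap_iff f g))
  rw [e0, card_postcomp f.rangeRestrict f.surjective_rangeRestrict
    (fun ψ : W →ₗ[F] R => IsNilpotent (ψ ∘ₗ R.subtype)), count_pre]
  rw [LinearMap.ker_rangeRestrict, hkerf]
  calc NN F r * q ^ ((finrank F W - r) * r) * q ^ (finrank F W * (finrank F V - r)) * q ^ r
      = (NN F r * q ^ r) * (q ^ ((finrank F W - r) * r) * q ^ (finrank F W * (finrank F V - r))) := by
        ring
    _ = q ^ (r * r) * q ^ ((finrank F W - r) * r + finrank F W * (finrank F V - r)) := by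
        rw [NN_mul_eq_nat, pow_add]
    _ = q ^ (r * r + ((finrank F W - r) * r + finrank F W * (finrank F V - r))) := by
        rw [← pow_add]
    _ = q ^ (finrank F W * finrank F V) := by
        congr 1
        have h1 : r * r + (finrank F W - r) * r = finrank F W * r := by
          rw [← add_mul, Nat.add_sub_cancel' hrn]
        have h2 : finrank F W * (finrank F V - r) + finrank F W * r = finrank F W * finrank F V := by
          rw [← mul_add, Nat.sub_add_cancel hrm]
        omega

lemma count_nilp_fixed_ker (f : V →ₗ[F] W) :
    Nat.card {g : W →ₗ[F] V // IsNilpotent (g ∘ₗ f)} * q ^ (finrank F V) =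
      q ^ (finrank F W * finrank F V) * Nat.card (LinearMap.ker f) := by
  set r := finrank F (LinearMap.range f) with hr
  have hrm : r ≤ finrank F V := by
    rw [hr]
    have := LinearMap.finrank_range_add_finrank_ker f
    omega
  have hkerf : finrank F (LinearMap.ker f) = finrank F V - r := by
    rw [hr]
    have := LinearMap.finrank_range_add_finrank_ker f
    omega
  have hcard : Nat.card (LinearMap.ker f) = q ^ (finrank F V - r) := by
    rw [card_vs (F := F) (V := ↥(LinearMap.ker f)), hkerf]
  rw [hcard]
  have := count_nilp_fixed f
  calc Nat.card {g : W →ₗ[F] V // IsNilpotent (g ∘ₗ f)} * q ^ (finrank F V)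
      = (Nat.card {g : W →ₗ[F] V // IsNilpotent (g ∘ₗ f)} * q ^ r) * q ^ (finrank F V - r) := by
        rw [mul_assoc, ← pow_add, Nat.add_sub_cancel' hrm]
    _ = q ^ (finrank F W * finrank F V) * q ^ (finrank F V - r) := by rw [this]

lemma count_zero_pairs :
    Nat.card {vf : (V →ₗ[F] W) × V // vf.1 vf.2 = 0} =
      q ^ (finrank F V * finrank F W) +
        (q ^ (finrank F V) - 1) * q ^ ((finrank F V - 1) * finrank F W) := by
  classical
  have hfinV : Finite V := myFinite (inferInstance : FiniteDimensional F V)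
  have : Fintype V := Fintype.ofFinite V
  have e1 : {vf : (V →ₗ[F] W) × V // vf.1 vf.2 = 0} ≃ Σ v : V, {f : V →ₗ[F] W // f v = 0} := by
    refine ⟨fun x => ⟨x.1.2, ⟨x.1.1, x.2⟩⟩, fun x => ⟨(x.2.1, x.1), x.2.2⟩, fun x => rfl, fun x => rfl⟩
  rw [Nat.card_congr e1, nat_card_sigma]
  have hzero : Nat.card {f : V →ₗ[F] W // f (0 : V) = 0} = q ^ (finrank F V * finrank F W) := by
    have e2 : {f : V →ₗ[F] W // f (0 : V) = 0} ≃ (V →ₗ[F] W) := by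
      refine ⟨fun x => x.1, fun f => ⟨f, map_zero f⟩, fun x => rfl, fun f => rfl⟩
    rw [Nat.card_congr e2, card_lm]
  have hnz : ∀ v : V, v ≠ 0 →
      Nat.card {f : V →ₗ[F] W // f v = 0} = q ^ ((finrank F V - 1) * finrank F W) := by
    intro v hv
    have e3 : {f : V →ₗ[F] W // f v = 0} ≃ {f : V →ₗ[F] W // Submodule.span F {v} ≤ LinearMap.ker f} := by
      refine Equiv.subtypeEquivRight ?_
      intro f
      rw [Submodule.span_singleton_le_iff_mem, LinearMap.mem_ker]
    rw [Nat.card_congr e3, card_vanish]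
    congr 2
    rw [finrank_span_singleton hv]
  rw [← Finset.add_sum_erase Finset.univ _ (Finset.mem_univ (0 : V)), hzero]
  congr 1
  have hconst : ∀ v ∈ Finset.univ.erase (0 : V),
      Nat.card {f : V →ₗ[F] W // f v = 0} = q ^ ((finrank F V - 1) * finrank F W) := by
    intro v hv
    exact hnz v (Finset.ne_of_mem_erase hv)
  rw [Finset.sum_congr rfl hconst, Finset.sum_const, smul_eq_mul]
  congr 1
  rw [Finset.card_erase_of_mem (Finset.mem_univ _), Finset.card_univ, ← Nat.card_eq_fintype_card,
    card_vs (F := F) (V := V)]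

lemma count_main :
    Nat.card {p : (V →ₗ[F] W) × (W →ₗ[F] V) // IsNilpotent (p.2 ∘ₗ p.1)} * q ^ (finrank F V) =
      q ^ (finrank F W * finrank F V) *
        (q ^ (finrank F V * finrank F W) +
          (q ^ (finrank F V) - 1) * q ^ ((finrank F V - 1) * finrank F W)) := by
  classical
  have hfinV : Finite V := myFinite (inferInstance : FiniteDimensional F V)
  have : Fintype (V →ₗ[F] W) := Fintype.ofFinite _
  have eT : {p : (V →ₗ[F] W) × (W →ₗ[F] V) // IsNilpotent (p.2 ∘ₗ p.1)} ≃
      Σ f : V →ₗ[F] W, {g : W →ₗ[F] V // IsNilpotent (g ∘ₗ f)} :=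
    Equiv.subtypeProdEquivSigmaSubtype (fun (f : V →ₗ[F] W) (g : W →ₗ[F] V) => IsNilpotent (g ∘ₗ f))
  rw [Nat.card_congr eT, nat_card_sigma, Finset.sum_mul]
  have hterm : ∀ f ∈ (Finset.univ : Finset (V →ₗ[F] W)),
      Nat.card {g : W →ₗ[F] V // IsNilpotent (g ∘ₗ f)} * q ^ (finrank F V) =
        q ^ (finrank F W * finrank F V) * Nat.card (LinearMap.ker f) := by
    intro f _
    exact count_nilp_fixed_ker f
  rw [Finset.sum_congr rfl hterm, ← Finset.mul_sum]
  congr 1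
  rw [← count_zero_pairs]
  have e1 : {vf : (V →ₗ[F] W) × V // vf.1 vf.2 = 0} ≃ Σ f : V →ₗ[F] W, {v : V // f v = 0} :=
    Equiv.subtypeProdEquivSigmaSubtype (fun (f : V →ₗ[F] W) (v : V) => f v = 0)
  rw [Nat.card_congr e1, nat_card_sigma]
  apply Finset.sum_congr rfl
  intro f _
  apply Nat.card_congr
  exact Equiv.subtypeEquivRight (fun v => (LinearMap.mem_ker (f := f)).symm)

end Main
/-- The probability that a uniformly random pair `(f, g)` of linear maps
`f : F_q^m → F_q^n`, `g : F_q^n → F_q^m` has `g ∘ f` nilpotent is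
`(q^m + q^n - 1)/q^(m+n)`, i.e. `q^(-m) + q^(-n) - q^(-m-n)`. -/
theorem stmt_11 (q m n : ℕ) (hq : IsPrimePow q) (hm : 1 ≤ m) (hn : 1 ≤ n)
    (F : Type*) [Field F] [Fintype F] (hF : Fintype.card F = q) :
    (Nat.card {p : ((Fin m → F) →ₗ[F] (Fin n → F)) × ((Fin n → F) →ₗ[F] (Fin m → F)) //
        IsNilpotent (p.2 ∘ₗ p.1)} : ℚ) / (q : ℚ) ^ (2 * m * n) =
      ((q : ℚ) ^ m + (q : ℚ) ^ n - 1) / (q : ℚ) ^ (m + n) ∧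
    ((q : ℚ) ^ m + (q : ℚ) ^ n - 1) / (q : ℚ) ^ (m + n) =
      (q : ℚ) ^ (-(m : ℤ)) + (q : ℚ) ^ (-(n : ℤ)) + -(q : ℚ) ^ (-(m : ℤ) - n) := by
  subst hF
  have hq1 : 1 ≤ Fintype.card F := Fintype.card_pos
  have hQ0 : ((Fintype.card F : ℕ) : ℚ) ≠ 0 := by positivity
  constructor
  · -- main count
    have hrV : finrank F (Fin m → F) = m := by
      rw [Module.finrank_fintype_fun_eq_card, Fintype.card_fin]
    have hrW : finrank F (Fin n → F) = n := by
      rw [Module.finrank_fintype_fun_eq_card, Fintype.card_fin]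
    have hmain := count_main (F := F) (V := Fin m → F) (W := Fin n → F)
    rw [hrV, hrW] at hmain
    set T := Nat.card {p : ((Fin m → F) →ₗ[F] (Fin n → F)) × ((Fin n → F) →ₗ[F] (Fin m → F)) //
        IsNilpotent (p.2 ∘ₗ p.1)} with hT
    set Q : ℚ := ((Fintype.card F : ℕ) : ℚ) with hQdef
    have hcast : (T : ℚ) * Q ^ m = Q ^ (n * m) * (Q ^ (m * n) + (Q ^ m - 1) * Q ^ ((m - 1) * n)) := by
      have h2 := congrArg (fun k : ℕ => (k : ℚ)) hmain
      have h3 : 1 ≤ Fintype.card F ^ m := Nat.one_le_pow m _ (by omega)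
      push_cast [Nat.cast_sub h3] at h2
      exact h2
    rw [div_eq_div_iff (by positivity) (by positivity)]
    obtain ⟨j, rfl⟩ : ∃ j, m = j + 1 := ⟨m - 1, by omega⟩
    calc (T : ℚ) * Q ^ (j + 1 + n) = ((T : ℚ) * Q ^ (j + 1)) * Q ^ n := by
          rw [pow_add]; ring
      _ = Q ^ (n * (j + 1)) * (Q ^ ((j + 1) * n) + (Q ^ (j + 1) - 1) * Q ^ ((j + 1 - 1) * n)) * Q ^ n := by
          rw [hcast]
      _ = (Q ^ (j + 1) + Q ^ n - 1) * Q ^ (2 * (j + 1) * n) := by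
          rw [Nat.add_sub_cancel]
          rw [show n * (j + 1) = j * n + n by ring, show (j + 1) * n = j * n + n by ring,
            show 2 * (j + 1) * n = (j * n + n) + (j * n + n) by ring]
          rw [pow_add, pow_add, pow_add]
          ring
  · -- zpow rewriting
    have h1 : ((Fintype.card F : ℕ) : ℚ) ^ (-(m : ℤ)) = (((Fintype.card F : ℕ) : ℚ) ^ m)⁻¹ := by
      rw [zpow_neg, zpow_natCast]
    have h2 : ((Fintype.card F : ℕ) : ℚ) ^ (-(n : ℤ)) = (((Fintype.card F : ℕ) : ℚ) ^ n)⁻¹ := by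
      rw [zpow_neg, zpow_natCast]
    have h3 : ((Fintype.card F : ℕ) : ℚ) ^ (-(m : ℤ) - n) = (((Fintype.card F : ℕ) : ℚ) ^ (m + n))⁻¹ := by
      rw [show (-(m : ℤ) - n) = -((m + n : ℕ) : ℤ) by push_cast; ring, zpow_neg, zpow_natCast]
    rw [h1, h2, h3]
    field_simp
    ring
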